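/- For every fixed integer I ≥ 0, the probability R(I,M) that a classical random map on M elements has exactly I introverts converges, as M → ∞, to the Poisson value R(I,∞) = exp(−I − e^{−1}) / I!. In particular the probability of having no introverts converges to exp(−e^{−1}). -/

import Mathlib

open Finset Filter Real Topology

open Finset

/-- The number of maps fixing a set `K` as isolated fixed points. -/
lemma lemA (M : ℕ) (K : Finset (Fin M)) :
    (univ.filter (fun f : Fin M → Fin M =>
      ∀ i ∈ K, f i = i ∧ ∀ j : Fin M, j ≠ i → f j ≠ i)).card
    = (M - K.card) ^ (M - K.card) := by
  classical
  have e : {f : Fin M → Fin M // ∀ i ∈ K, f i = i ∧ ∀ j : Fin M, j ≠ i → f j ≠ i}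
      ≃ ((Kᶜ : Finset (Fin M)) → (Kᶜ : Finset (Fin M))) := by
    refine
    { toFun := fun f x => ⟨f.1 x, ?_⟩
      invFun := fun g => ⟨fun i => if h : i ∈ K then i else
        (g ⟨i, Finset.mem_compl.2 h⟩ : Fin M), ?_⟩
      left_inv := ?_
      right_inv := ?_ }
    · rcases f with ⟨f, hf⟩
      rcases x with ⟨x, hx⟩
      simp only [Finset.mem_compl] at hx ⊢
      intro hfx
      exact (hf _ hfx).2 x (fun h => hx (h ▸ hfx)) rfl
    · intro i hi
      refine ⟨dif_pos hi, fun j hj => ?_⟩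
      by_cases hjK : j ∈ K
      · simpa only [dif_pos hjK] using hj
      · simp only [dif_neg hjK]
        intro h
        exact (Finset.mem_compl.1 (g ⟨j, Finset.mem_compl.2 hjK⟩).2) (h ▸ hi)
    · rintro ⟨f, hf⟩
      apply Subtype.ext
      funext i
      by_cases hi : i ∈ K
      · simp only [dif_pos hi]
        exact ((hf i hi).1).symm
      · simp [dif_neg hi]
    · intro g
      funext x
      rcases x with ⟨x, hx⟩
      have hxK : x ∉ K := Finset.mem_compl.1 hx
      apply Subtype.ext
      simp [dif_neg hxK]
  have h1 : (univ.filter (fun f : Fin M → Fin M =>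
      ∀ i ∈ K, f i = i ∧ ∀ j : Fin M, j ≠ i → f j ≠ i)).card
      = Fintype.card {f : Fin M → Fin M // ∀ i ∈ K, f i = i ∧ ∀ j : Fin M, j ≠ i → f j ≠ i} := by
    rw [Fintype.card_subtype]
  rw [h1, Fintype.card_congr e, Fintype.card_fun, Fintype.card_coe,
    Finset.card_compl, Fintype.card_fin]

open Finset

lemma lemC (I j : ℕ) :
    ∑ m ∈ range (j + 1), (j.choose m) • ((-1 : ℤ) ^ m * (m.choose I)) =
      (-1) ^ I * (if j = I then 1 else 0) := by
  rcases lt_or_ge j I with hj | hj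
  · rw [if_neg hj.ne, mul_zero]
    apply Finset.sum_eq_zero
    intro m hm
    rw [mem_range, Nat.lt_succ_iff] at hm
    rw [Nat.choose_eq_zero_of_lt (lt_of_le_of_lt hm hj)]
    simp
  · -- I ≤ j
    rw [range_eq_Ico, ← Finset.sum_Ico_consecutive _ (Nat.zero_le I) (by omega : I ≤ j + 1)]
    have h1 : ∑ m ∈ Ico 0 I, (j.choose m) • ((-1 : ℤ) ^ m * (m.choose I)) = 0 := by
      apply Finset.sum_eq_zero
      intro m hm
      rw [mem_Ico] at hm
      rw [Nat.choose_eq_zero_of_lt hm.2]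
      simp
    rw [h1, zero_add, Finset.sum_Ico_eq_sum_range]
    have h2 : ∀ t ∈ range (j + 1 - I),
        (j.choose (I + t)) • ((-1 : ℤ) ^ (I + t) * ((I + t).choose I)) =
        (j.choose I : ℤ) * (-1) ^ I * ((-1) ^ t * ((j - I).choose t)) := by
      intro t ht
      rw [mem_range] at ht
      have hIt : I + t ≤ j := by omega
      have key : j.choose (I + t) * (I + t).choose I = j.choose I * (j - I).choose (I + t - I) :=
        Nat.choose_mul (n := j) (Nat.le_add_right I t)
      rw [Nat.add_sub_cancel_left] at key
      have h5 : ((j.choose (I + t)) : ℤ) * ((I + t).choose I)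
          = ((j.choose I) : ℤ) * ((j - I).choose t) := by exact_mod_cast key
      rw [nsmul_eq_mul, pow_add]
      push_cast
      linear_combination ((-1:ℤ)^I * (-1)^t) * h5
    rw [Finset.sum_congr rfl h2, ← Finset.mul_sum]
    have h3 : j + 1 - I = (j - I) + 1 := by omega
    rw [h3, Int.alternating_sum_range_choose]
    have h4 : (j - I = 0) ↔ (j = I) := by omega
    by_cases hjI : j = I
    · rw [if_pos (h4.2 hjI), if_pos hjI, hjI, Nat.choose_self]
      ring
    · rw [if_neg (fun h => hjI (h4.1 h)), if_neg hjI]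
      ring

lemma lemB (I M : ℕ) :
    ∑ k ∈ range (M + 1), (M.choose k) • ((-1 : ℤ) ^ k * (k.choose I) * ((M - k) ^ (M - k) : ℕ))
    = (-1) ^ I * ((univ.filter (fun f : Fin M → Fin M =>
        (univ.filter (fun i : Fin M => f i = i ∧ ∀ j : Fin M, j ≠ i → f j ≠ i)).card = I)).card : ℤ) := by
  classical
  have hcard : (univ : Finset (Fin M)).card = M := by simp
  have step1 : ∑ K ∈ (univ : Finset (Fin M)).powerset,
      ((-1 : ℤ) ^ K.card * (K.card.choose I) * (((M - K.card) ^ (M - K.card) : ℕ) : ℤ))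
      = ∑ k ∈ range (M + 1), (M.choose k) •
          ((-1 : ℤ) ^ k * (k.choose I) * ((M - k) ^ (M - k) : ℕ)) := by
    rw [Finset.sum_powerset_apply_card
      (fun m => (-1 : ℤ) ^ m * (m.choose I) * (((M - m) ^ (M - m) : ℕ) : ℤ)), hcard]
  rw [← step1]
  -- replace (M - #K)^(M - #K) with the count from lemA
  have step2 : ∀ K ∈ (univ : Finset (Fin M)).powerset,
      ((-1 : ℤ) ^ K.card * (K.card.choose I) * (((M - K.card) ^ (M - K.card) : ℕ) : ℤ))
      = ∑ f ∈ (univ : Finset (Fin M → Fin M)),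
          if (∀ i ∈ K, f i = i ∧ ∀ j : Fin M, j ≠ i → f j ≠ i)
          then (-1 : ℤ) ^ K.card * (K.card.choose I) else 0 := by
    intro K _
    rw [← Finset.sum_filter, Finset.sum_const, ← lemA M K, nsmul_eq_mul]
    ring
  rw [Finset.sum_congr rfl step2, Finset.sum_comm]
  have step3 : ∀ f : Fin M → Fin M,
      ∑ K ∈ (univ : Finset (Fin M)).powerset,
        (if (∀ i ∈ K, f i = i ∧ ∀ j : Fin M, j ≠ i → f j ≠ i)
          then (-1 : ℤ) ^ K.card * (K.card.choose I) else 0)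
      = (-1) ^ I * (if (univ.filter (fun i : Fin M =>
          f i = i ∧ ∀ j : Fin M, j ≠ i → f j ≠ i)).card = I then 1 else 0) := by
    intro f
    set T : Finset (Fin M) := univ.filter (fun i : Fin M =>
      f i = i ∧ ∀ j : Fin M, j ≠ i → f j ≠ i) with hT
    have hiff : ∀ K : Finset (Fin M),
        (∀ i ∈ K, f i = i ∧ ∀ j : Fin M, j ≠ i → f j ≠ i) ↔ K ⊆ T := by
      intro K
      constructor
      · intro h x hx
        rw [hT, Finset.mem_filter]
        exact ⟨Finset.mem_univ x, h x hx⟩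
      · intro h x hx
        have := h hx
        rw [hT, Finset.mem_filter] at this
        exact this.2
    have : ∑ K ∈ (univ : Finset (Fin M)).powerset,
        (if (∀ i ∈ K, f i = i ∧ ∀ j : Fin M, j ≠ i → f j ≠ i)
          then (-1 : ℤ) ^ K.card * (K.card.choose I) else 0)
        = ∑ K ∈ T.powerset, (-1 : ℤ) ^ K.card * (K.card.choose I) := by
      rw [Finset.powerset_univ]
      rw [← Finset.sum_filter]
      congr 1
      ext K
      simp [hiff K, Finset.mem_powerset]
    rw [this, Finset.sum_powerset_apply_card (fun m => (-1 : ℤ) ^ m * (m.choose I)), lemC I T.card]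
  rw [Finset.sum_congr rfl (fun f _ => step3 f), ← Finset.mul_sum]
  congr 1
  rw [Finset.sum_boole]

lemma lemE (k : ℕ) :
    Tendsto (fun M : ℕ => (M.choose k : ℝ) * ((M - k : ℕ) : ℝ) ^ (M - k) / (M : ℝ) ^ M)
      atTop (𝓝 (Real.exp (-1) ^ k / (Nat.factorial k : ℝ))) := by
  have hk! : ((Nat.factorial k : ℝ)) ≠ 0 := by positivity
  -- the auxiliary expression
  set E : ℕ → ℝ := fun M =>
    (∏ i ∈ range k, (1 - (i : ℝ) / M)) * (1 / (Nat.factorial k : ℝ))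
      * (1 + (-(k : ℝ)) / M) ^ M / (1 - (k : ℝ) / M) ^ k with hE
  have heq : ∀ᶠ M : ℕ in atTop, E M
      = (M.choose k : ℝ) * ((M - k : ℕ) : ℝ) ^ (M - k) / (M : ℝ) ^ M := by
    filter_upwards [eventually_ge_atTop (k + 1)] with M hM
    have hkM : k ≤ M := by omega
    obtain ⟨m, hm⟩ : ∃ m, M = k + m := ⟨M - k, by omega⟩
    subst hm
    have hm0 : 0 < m := by omega
    have hx : (0 : ℝ) < (k + m : ℕ) := by
      have : 0 < k + m := by omega
      exact_mod_cast this
    have hxk : ((k : ℝ)) < ((k + m : ℕ) : ℝ) := by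
      have : k < k + m := by omega
      exact_mod_cast this
    set x : ℝ := ((k + m : ℕ) : ℝ) with hxdef
    have hx0 : x ≠ 0 := ne_of_gt hx
    have hxk0 : x - k ≠ 0 := by linarith
    -- cast facts
    have hsub : ((k + m - k : ℕ) : ℝ) = x - k := by
      rw [Nat.add_sub_cancel_left]; rw [hxdef]; push_cast; ring
    have hsubn : k + m - k = m := by omega
    have hchoose : ((k + m).choose k : ℝ) * (Nat.factorial k : ℝ)
        = ∏ i ∈ range k, (x - i) := by
      have h1 : (k + m).descFactorial k = Nat.factorial k * (k + m).choose k :=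
        Nat.descFactorial_eq_factorial_mul_choose _ _
      have h2 : ((k + m).descFactorial k : ℝ) = ∏ i ∈ range k, (x - i) := by
        rw [Nat.descFactorial_eq_prod_range]
        push_cast
        refine Finset.prod_congr rfl fun i hi => ?_
        rw [mem_range] at hi
        rw [Nat.cast_sub (by omega), hxdef]
      rw [← h2, h1]; push_cast; ring
    have hfrac : 1 + (-(k : ℝ)) / x = (x - k) / x := by field_simp; ring
    have hfrac2 : 1 - (k : ℝ) / x = (x - k) / x := by field_simp
    have hprod : ∏ i ∈ range k, (1 - (i : ℝ) / x) = (∏ i ∈ range k, (x - i)) / x ^ k := by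
      have : ∀ i ∈ range k, (1 - (i : ℝ) / x) = (x - i) / x := by
        intro i _
        field_simp
      rw [Finset.prod_congr rfl this, Finset.prod_div_distrib, Finset.prod_const, card_range]
    show (∏ i ∈ range k, (1 - (i : ℝ) / x)) * (1 / (Nat.factorial k : ℝ))
        * (1 + (-(k : ℝ)) / x) ^ (k + m) / (1 - (k : ℝ) / x) ^ k
      = ((k + m).choose k : ℝ) * ((k + m - k : ℕ) : ℝ) ^ (k + m - k) / x ^ (k + m)
    rw [hsub, hsubn, hprod, hfrac, hfrac2, div_pow, div_pow, pow_add]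
    have hc : ((k + m).choose k : ℝ) = (∏ i ∈ range k, (x - i)) / (Nat.factorial k : ℝ) := by
      field_simp [← hchoose]
      exact hchoose
    rw [hc]
    have hxk' : (x ^ k) ≠ 0 := pow_ne_zero _ hx0
    have hxm' : (x ^ m) ≠ 0 := pow_ne_zero _ hx0
    have hxkk : ((x - k) ^ k) ≠ 0 := pow_ne_zero _ hxk0
    field_simp
  -- limits
  have hP : Tendsto (fun M : ℕ => ∏ i ∈ range k, (1 - (i : ℝ) / M)) atTop (𝓝 1) := by
    have : Tendsto (fun M : ℕ => ∏ i ∈ range k, (1 - (i : ℝ) / M)) atTop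
        (𝓝 (∏ i ∈ range k, (1 : ℝ))) := by
      refine tendsto_finset_prod _ fun i _ => ?_
      have := (tendsto_const_nhds (x := (1:ℝ)) (f := atTop)).sub
        (tendsto_const_div_atTop_nhds_zero_nat (i : ℝ))
      simpa using this
    simpa using this
  have hA : Tendsto (fun M : ℕ => (1 + (-(k : ℝ)) / M) ^ M) atTop (𝓝 (Real.exp (-(k:ℝ)))) :=
    Real.tendsto_one_add_div_pow_exp (-(k : ℝ))
  have hB : Tendsto (fun M : ℕ => (1 - (k : ℝ) / M) ^ k) atTop (𝓝 1) := by
    have h0 : Tendsto (fun M : ℕ => 1 - (k : ℝ) / M) atTop (𝓝 1) := by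
      have := (tendsto_const_nhds (x := (1:ℝ)) (f := atTop)).sub
        (tendsto_const_div_atTop_nhds_zero_nat (k : ℝ))
      simpa using this
    simpa using h0.pow k
  have hlim : Tendsto E atTop (𝓝 (1 * (1 / (Nat.factorial k : ℝ)) * Real.exp (-(k:ℝ)) / 1)) :=
    ((hP.mul tendsto_const_nhds).mul hA).div hB one_ne_zero
  have hval : 1 * (1 / (Nat.factorial k : ℝ)) * Real.exp (-(k:ℝ)) / 1
      = Real.exp (-1) ^ k / (Nat.factorial k : ℝ) := by
    rw [← Real.exp_nat_mul]
    push_cast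
    ring_nf
  rw [hval] at hlim
  exact hlim.congr' heq

lemma lemF (M k : ℕ) (h : k ≤ M) :
    (M.choose k : ℝ) * ((M - k : ℕ) : ℝ) ^ (M - k) / (M : ℝ) ^ M
      ≤ 1 / (Nat.factorial k : ℝ) := by
  have hnat : Nat.factorial k * (M.choose k * (M - k) ^ (M - k)) ≤ M ^ M := by
    calc Nat.factorial k * (M.choose k * (M - k) ^ (M - k))
        = (Nat.factorial k * M.choose k) * (M - k) ^ (M - k) := by ring
      _ = M.descFactorial k * (M - k) ^ (M - k) := by
          rw [Nat.descFactorial_eq_factorial_mul_choose]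
      _ ≤ M ^ k * M ^ (M - k) :=
          Nat.mul_le_mul (Nat.descFactorial_le_pow M k)
            (Nat.pow_le_pow_left (Nat.sub_le M k) _)
      _ = M ^ (k + (M - k)) := (pow_add M k (M - k)).symm
      _ = M ^ M := by rw [Nat.add_sub_cancel' h]
  have hMM : (0 : ℝ) < (M : ℝ) ^ M := by
    rcases Nat.eq_zero_or_pos M with h0 | h0
    · subst h0; norm_num
    · positivity
  have hk! : (0 : ℝ) < (Nat.factorial k : ℝ) := by positivity
  rw [div_le_div_iff₀ hMM hk!]
  have : ((Nat.factorial k * (M.choose k * (M - k) ^ (M - k)) : ℕ) : ℝ)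
      ≤ ((M ^ M : ℕ) : ℝ) := by exact_mod_cast hnat
  push_cast at this
  nlinarith [this]

/-- For fixed `I`, the probability that a classical random map on `M` elements
has exactly `I` introverts (isolated fixed points) converges, as `M → ∞`, to
`exp(-I - e⁻¹) / I!`. -/
theorem stmt5 (I : ℕ) :
    Filter.Tendsto (fun M : ℕ =>
        (Set.ncard {f : Fin M → Fin M |
            (Finset.univ.filter (fun i : Fin M =>
              f i = i ∧ ∀ j : Fin M, j ≠ i → f j ≠ i)).card = I} : ℝ)
          / (M : ℝ) ^ M)
      Filter.atTop
      (nhds (Real.exp (-(I : ℝ) - Real.exp (-1)) / (Nat.factorial I : ℝ))) := by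
  classical
  -- the term functions
  set F : ℕ → ℕ → ℝ := fun M k => if k ≤ M then
      (-1 : ℝ) ^ I * (-1) ^ k * (k.choose I) *
        ((M.choose k : ℝ) * ((M - k : ℕ) : ℝ) ^ (M - k) / (M : ℝ) ^ M)
    else 0 with hF
  set g : ℕ → ℝ := fun k =>
      (-1 : ℝ) ^ I * (-1) ^ k * (k.choose I) * (Real.exp (-1) ^ k / (Nat.factorial k : ℝ))
    with hg
  set bound : ℕ → ℝ := fun k => (k.choose I : ℝ) / (Nat.factorial k : ℝ) with hbound
  have hMM : ∀ M : ℕ, (0 : ℝ) < (M : ℝ) ^ M := by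
    intro M
    rcases Nat.eq_zero_or_pos M with h0 | h0
    · subst h0; norm_num
    · positivity
  -- the bound is summable
  have hbnd_nonneg : ∀ k, 0 ≤ bound k := fun k => by simp only [hbound]; positivity
  have hb' : Summable (fun k : ℕ => (1 / (Nat.factorial I : ℝ)) * (1 / (Nat.factorial (k - I) : ℝ))) := by
    apply Summable.mul_left
    have h1 : Summable (fun n : ℕ => (1 : ℝ) ^ n / (Nat.factorial n : ℝ)) :=
      Real.summable_pow_div_factorial 1
    have h2 : Summable (fun n : ℕ => (1 : ℝ) / (Nat.factorial ((n + I) - I) : ℝ)) := by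
      simpa using h1
    exact (summable_nat_add_iff I).1 h2
  have hbd_le : ∀ k, bound k ≤ (1 / (Nat.factorial I : ℝ)) * (1 / (Nat.factorial (k - I) : ℝ)) := by
    intro k
    rcases lt_or_ge k I with hk | hk
    · simp only [hbound, Nat.choose_eq_zero_of_lt hk, Nat.cast_zero, zero_div]
      positivity
    · have key : k.choose I * Nat.factorial I * Nat.factorial (k - I) = Nat.factorial k :=
        Nat.choose_mul_factorial_mul_factorial hk
      have : bound k = (1 / (Nat.factorial I : ℝ)) * (1 / (Nat.factorial (k - I) : ℝ)) := by
        simp only [hbound]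
        have hkey : ((k.choose I : ℝ)) * (Nat.factorial I : ℝ) * (Nat.factorial (k - I) : ℝ)
            = (Nat.factorial k : ℝ) := by exact_mod_cast key
        field_simp
        nlinarith [hkey]
      rw [this]
  have h_sum : Summable bound :=
    Summable.of_nonneg_of_le hbnd_nonneg hbd_le hb'
  -- pointwise bound
  have h_bound : ∀ᶠ M : ℕ in atTop, ∀ k, ‖F M k‖ ≤ bound k := by
    refine Eventually.of_forall fun M k => ?_
    simp only [hF]
    by_cases hk : k ≤ M
    · rw [if_pos hk]
      have hT0 : 0 ≤ (M.choose k : ℝ) * ((M - k : ℕ) : ℝ) ^ (M - k) / (M : ℝ) ^ M := by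
        positivity
      have habs : ‖(-1 : ℝ) ^ I * (-1) ^ k * (k.choose I) *
          ((M.choose k : ℝ) * ((M - k : ℕ) : ℝ) ^ (M - k) / (M : ℝ) ^ M)‖
          = (k.choose I : ℝ) * ((M.choose k : ℝ) * ((M - k : ℕ) : ℝ) ^ (M - k) / (M : ℝ) ^ M) := by
        rw [Real.norm_eq_abs, abs_mul, abs_mul, abs_mul]
        simp [abs_of_nonneg hT0]
      rw [habs, hbound]
      have := lemF M k hk
      have hcI : (0:ℝ) ≤ (k.choose I : ℝ) := by positivity
      calc (k.choose I : ℝ) * ((M.choose k : ℝ) * ((M - k : ℕ) : ℝ) ^ (M - k) / (M : ℝ) ^ M)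
          ≤ (k.choose I : ℝ) * (1 / (Nat.factorial k : ℝ)) := by
            exact mul_le_mul_of_nonneg_left this hcI
        _ = (k.choose I : ℝ) / (Nat.factorial k : ℝ) := by ring
    · rw [if_neg hk]
      simpa using hbnd_nonneg k
  -- pointwise convergence
  have hab : ∀ k, Tendsto (fun M => F M k) atTop (𝓝 (g k)) := by
    intro k
    have hlim : Tendsto (fun M : ℕ =>
        (-1 : ℝ) ^ I * (-1) ^ k * (k.choose I) *
          ((M.choose k : ℝ) * ((M - k : ℕ) : ℝ) ^ (M - k) / (M : ℝ) ^ M)) atTop (𝓝 (g k)) := by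
      simp only [hg]
      exact (lemE k).const_mul _
    refine hlim.congr' ?_
    filter_upwards [eventually_ge_atTop k] with M hM
    simp only [hF, if_pos hM]
  -- DCT
  have hDCT := tendsto_tsum_of_dominated_convergence h_sum hab h_bound
  -- identify the prelimit
  have heq : (fun M : ℕ =>
        (Set.ncard {f : Fin M → Fin M |
            (Finset.univ.filter (fun i : Fin M =>
              f i = i ∧ ∀ j : Fin M, j ≠ i → f j ≠ i)).card = I} : ℝ)
          / (M : ℝ) ^ M) = fun M => ∑' k, F M k := by
    funext M
    -- finite support
    have hsupp : ∀ k ∉ range (M + 1), F M k = 0 := by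
      intro k hk
      rw [mem_range] at hk
      simp only [hF]
      exact if_neg (by omega)
    rw [tsum_eq_sum hsupp]
    -- ncard to Finset card
    have hset : {f : Fin M → Fin M |
        (Finset.univ.filter (fun i : Fin M =>
          f i = i ∧ ∀ j : Fin M, j ≠ i → f j ≠ i)).card = I}
        = ↑(univ.filter (fun f : Fin M → Fin M =>
            (univ.filter (fun i : Fin M => f i = i ∧ ∀ j : Fin M, j ≠ i → f j ≠ i)).card = I)) := by
      ext f
      simp
    rw [hset, Set.ncard_coe_finset]
    -- use lemB
    have hInt := lemB I M
    have hR : ∑ k ∈ range (M + 1),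
        ((M.choose k : ℝ) * ((-1) ^ k * (k.choose I) * (((M - k) ^ (M - k) : ℕ) : ℝ)))
        = (-1) ^ I * ((univ.filter (fun f : Fin M → Fin M =>
            (univ.filter (fun i : Fin M => f i = i ∧ ∀ j : Fin M, j ≠ i → f j ≠ i)).card = I)).card : ℝ) := by
      exact_mod_cast hInt
    have hN : ((univ.filter (fun f : Fin M → Fin M =>
        (univ.filter (fun i : Fin M => f i = i ∧ ∀ j : Fin M, j ≠ i → f j ≠ i)).card = I)).card : ℝ)
        = (-1) ^ I * ∑ k ∈ range (M + 1),
          ((M.choose k : ℝ) * ((-1) ^ k * (k.choose I) * (((M - k) ^ (M - k) : ℕ) : ℝ))) := by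
      have hsq : (-1 : ℝ) ^ I * (-1) ^ I = 1 := by
        rw [← pow_add, ← two_mul, pow_mul]
        norm_num
      rw [hR, ← mul_assoc, hsq, one_mul]
    rw [hN, Finset.mul_sum, Finset.sum_div]
    refine Finset.sum_congr rfl fun k hk => ?_
    rw [mem_range] at hk
    have hkM : k ≤ M := Nat.lt_succ_iff.mp hk
    simp only [hF, if_pos hkM]
    push_cast
    ring
  rw [heq]
  -- identify the limit
  have hsum_g : Summable g := by
    refine Summable.of_norm_bounded h_sum fun k => ?_
    simp only [hg, hbound]
    rw [Real.norm_eq_abs, abs_mul, abs_mul, abs_mul]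
    have h1 : |(-1 : ℝ) ^ I| = 1 := by simp
    have h2 : |(-1 : ℝ) ^ k| = 1 := by simp
    have h3 : |(k.choose I : ℝ)| = (k.choose I : ℝ) := abs_of_nonneg (by positivity)
    have hexp1 : Real.exp (-1) ≤ 1 := by
      rw [show (1:ℝ) = Real.exp 0 by simp]
      exact Real.exp_le_exp.2 (by norm_num)
    have h4 : |Real.exp (-1) ^ k / (Nat.factorial k : ℝ)| ≤ 1 / (Nat.factorial k : ℝ) := by
      rw [abs_of_nonneg (by positivity)]
      gcongr
      exact pow_le_one₀ (le_of_lt (Real.exp_pos _)) hexp1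
    calc |(-1:ℝ) ^ I| * |(-1:ℝ) ^ k| * |(k.choose I : ℝ)| * |Real.exp (-1) ^ k / (Nat.factorial k : ℝ)|
        = (k.choose I : ℝ) * |Real.exp (-1) ^ k / (Nat.factorial k : ℝ)| := by
          rw [h1, h2, h3]; ring
      _ ≤ (k.choose I : ℝ) * (1 / (Nat.factorial k : ℝ)) :=
          mul_le_mul_of_nonneg_left h4 (by positivity)
      _ = (k.choose I : ℝ) / (Nat.factorial k : ℝ) := by ring
  have hexp : ∀ x : ℝ, ∑' n : ℕ, x ^ n / (Nat.factorial n : ℝ) = Real.exp x := by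
    intro x
    rw [Real.exp_eq_exp_ℝ, NormedSpace.exp_eq_tsum_div]
  have hval : ∑' k, g k = Real.exp (-(I : ℝ) - Real.exp (-1)) / (Nat.factorial I : ℝ) := by
    have hsplit := (Summable.sum_add_tsum_nat_add I hsum_g).symm
    have hzero : ∑ i ∈ range I, g i = 0 := by
      apply Finset.sum_eq_zero
      intro i hi
      rw [mem_range] at hi
      simp only [hg]
      simp [Nat.choose_eq_zero_of_lt hi]
    have hfun : ∀ m : ℕ, g (m + I)
        = (Real.exp (-1) ^ I / (Nat.factorial I : ℝ)) * ((-Real.exp (-1)) ^ m / (Nat.factorial m : ℝ)) := by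
      intro m
      have hcn : (m + I).choose I * Nat.factorial I * Nat.factorial m = Nat.factorial (m + I) := by
        have := Nat.choose_mul_factorial_mul_factorial (Nat.le_add_left I m)
        simpa [Nat.add_sub_cancel] using this
      have hc : ((m + I).choose I : ℝ) * (Nat.factorial I : ℝ) * (Nat.factorial m : ℝ)
          = (Nat.factorial (m + I) : ℝ) := by exact_mod_cast hcn
      simp only [hg]
      have hI! : ((Nat.factorial I : ℝ)) ≠ 0 := by positivity
      have hm! : ((Nat.factorial m : ℝ)) ≠ 0 := by positivity
      have hmI! : ((Nat.factorial (m + I) : ℝ)) ≠ 0 := by positivity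
      have hsq : (-1 : ℝ) ^ I * (-1) ^ I = 1 := by
        rw [← pow_add, ← two_mul, pow_mul]
        norm_num
      have hchoose : ((m + I).choose I : ℝ)
          = (Nat.factorial (m + I) : ℝ) / ((Nat.factorial I : ℝ) * (Nat.factorial m : ℝ)) := by
        rw [eq_div_iff (mul_ne_zero hI! hm!)]
        linear_combination hc
      have h2I : (-1 : ℝ) ^ (I * 2) = 1 := by
        rw [mul_comm, pow_mul]
        norm_num
      rw [pow_add (-1 : ℝ) m I, pow_add (Real.exp (-1)) m I, neg_pow, hchoose]
      field_simp
      linear_combination (Real.exp (-1) ^ m * (-1) ^ m) * h2I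
    rw [hsplit, hzero, zero_add]
    have : ∑' m : ℕ, g (m + I)
        = (Real.exp (-1) ^ I / (Nat.factorial I : ℝ)) * ∑' m : ℕ, ((-Real.exp (-1)) ^ m / (Nat.factorial m : ℝ)) := by
      rw [← tsum_mul_left]
      exact tsum_congr hfun
    rw [this, hexp]
    have hpow : Real.exp (-1) ^ I = Real.exp (-(I : ℝ)) := by
      rw [← Real.exp_nat_mul]
      norm_num
    rw [hpow, div_mul_eq_mul_div, ← Real.exp_add]
    ring_nf
  rw [← hval]
  exact hDCT
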